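/- Define Eve's projectors on ℂ^d_E ⊗ (ℂ²_{e₁}⊗ℂ²_{e₂}⊗ℂ²_{e₃}): M₄,₁ = I_E⊗|1⟩⟨1|_{e₁}⊗|0⟩⟨0|_{e₂}⊗|0⟩⟨0|_{e₃}; M₄,₂ = |1⟩⟨1|_E⊗|1⟩⟨1|_{e₁}⊗|0⟩⟨0|_{e₂}⊗|1⟩⟨1|_{e₃}; M₄,₃ = P_E{1,…,d−1}⊗|0⟩⟨0|_{e₁}⊗|1⟩⟨1|_{e₂}⊗|1⟩⟨1|_{e₃}; M₄,₄ = P_E{1,…,d−1}⊗|0⟩⟨0|_{e₁}⊗|0⟩⟨0|_{e₂}⊗I_{e₃}; M₄,₅ = I − M₄,₁ − M₄,₂ − M₄,₃ − M₄,₄, where P_E{1,…,d−1} = Σ_{k=1}^{d−1}|k⟩⟨k|_E. Then, tensored with the identity on all other factors: M₄,₁ acts as the identity on every post-measurement state arising from H₃; M₄,₂ on those from H₆; M₄,₃ on those from H₉; M₄,₄ on those from H₄; and M₄,₅ on those from each of H₁, H₂, H₅, H₇, H₈, H₁₀. (Step 2 of the proof of Theorem 9: Eve's first measurement identifies the subsets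 H₃, H₆, H₉, H₄.) -/

import Mathlib

noncomputable section

/-- View a coefficient function as a vector of the Euclidean (Hilbert) space. -/
def ofFun {ι : Type*} [Fintype ι] (f : ι → ℂ) : EuclideanSpace ℂ ι := WithLp.toLp 2 f

/-- Transport an endomorphism of the coefficient functions to the Euclidean space. -/
def toE {ι : Type*} [Fintype ι] (T : (ι → ℂ) →ₗ[ℂ] (ι → ℂ)) :
    Module.End ℂ (EuclideanSpace ℂ ι) :=
  (WithLp.linearEquiv 2 ℂ (ι → ℂ)).symm.toLinearMap ∘ₗ T ∘ₗ
    (WithLp.linearEquiv 2 ℂ (ι → ℂ)).toLinearMap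

open Classical in
/-- Diagonal orthogonal projection keeping exactly the basis vectors whose index
satisfies `f`. -/
def diagP {ι : Type*} [Fintype ι] (f : ι → Prop) : Module.End ℂ (EuclideanSpace ℂ ι) :=
  toE (LinearMap.pi fun i => (if f i then (1 : ℂ) else 0) • LinearMap.proj i)

/-- Tensor product of two vectors, realized on the product index set. -/
def tensE {ι κ : Type*} [Fintype ι] [Fintype κ]
    (u : EuclideanSpace ℂ ι) (w : EuclideanSpace ℂ κ) : EuclideanSpace ℂ (ι × κ) :=
  ofFun fun p => u p.1 * w p.2

/-- The root of unity `ω_n = e^{2πi/n}`. -/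
def omegaC (n : ℕ) : ℂ := Complex.exp (2 * Real.pi * Complex.I / n)

/-- Computational basis vector `|k⟩` of `ℂ^d`. -/
def ketD (d k : ℕ) : EuclideanSpace ℂ (Fin d) :=
  ofFun fun u => if (u : ℕ) = k then 1 else 0

/-- The (unnormalized) vector `|α_i⟩ = Σ_{u=0}^{d−1} ω_d^{iu}|u⟩`. -/
def alphaD (d i : ℕ) : EuclideanSpace ℂ (Fin d) :=
  ofFun fun u => omegaC d ^ (i * (u : ℕ))

/-- The (unnormalized) vector `|γ_m⟩ = Σ_{u=0}^{d−2} ω_{d−1}^{mu}|u+1⟩`. -/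
def gammaD (d m : ℕ) : EuclideanSpace ℂ (Fin d) :=
  ofFun fun u => if (u : ℕ) = 0 then 0 else omegaC (d - 1) ^ (m * ((u : ℕ) - 1))

/-- Tensor product of five vectors of `ℂ^d`, realized on the index set `Fin 5 → Fin d`. -/
def tp5 {d : ℕ} (v0 v1 v2 v3 v4 : EuclideanSpace ℂ (Fin d)) :
    EuclideanSpace ℂ (Fin 5 → Fin d) :=
  ofFun fun x => v0 (x 0) * v1 (x 1) * v2 (x 2) * v3 (x 3) * v4 (x 4)

/-- The states of set (5): family `k : Fin 10` corresponds to `H_{k+1}`; the parameter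
`a` is the spectral parameter (`i ∈ ℤ_d` for `H₁,…,H₅`, `m ∈ ℤ_{d−1}` for `H₆,…,H₁₀`),
and `p` is the index of the computational basis vector `|p⟩ ∈ {|1⟩,…,|d−1⟩}`. -/
def stateOf (d : ℕ) (k : Fin 10) (a p : ℕ) : EuclideanSpace ℂ (Fin 5 → Fin d) :=
  if k = 0 then tp5 (alphaD d a) (alphaD d a) (ketD d p) (ketD d 0) (ketD d 0)
  else if k = 1 then tp5 (alphaD d a) (ketD d p) (ketD d 0) (ketD d 0) (alphaD d a)
  else if k = 2 then tp5 (ketD d p) (ketD d 0) (ketD d 0) (alphaD d a) (alphaD d a)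
  else if k = 3 then tp5 (ketD d 0) (ketD d 0) (alphaD d a) (alphaD d a) (ketD d p)
  else if k = 4 then tp5 (ketD d 0) (alphaD d a) (alphaD d a) (ketD d p) (ketD d 0)
  else if k = 5 then tp5 (gammaD d a) (ketD d 0) (ketD d p) (ketD d 0) (ketD d 1)
  else if k = 6 then tp5 (ketD d 0) (ketD d p) (ketD d 0) (ketD d 1) (gammaD d a)
  else if k = 7 then tp5 (ketD d p) (ketD d 0) (ketD d 1) (gammaD d a) (ketD d 0)
  else if k = 8 then tp5 (ketD d 0) (ketD d 1) (gammaD d a) (ketD d 0) (ketD d p)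
  else tp5 (ketD d 1) (gammaD d a) (ketD d 0) (ketD d p) (ketD d 0)

/-- Ranges of the parameters of the states of set (5). -/
def validIdx (d : ℕ) (k : Fin 10) (a p : ℕ) : Prop :=
  (if (k : ℕ) < 5 then a < d else a < d - 1) ∧ 1 ≤ p ∧ p < d

/-- The full Hilbert space: five `ℂ^d` subsystems `A,B,C,D,E` (positions `0,…,4`),
ancilla qubits `a,b,c` (first `Fin 3 → Fin 2` factor, attached to `A,B,C`),
ancilla qubits `v₁,v₂,v₃` (second factor, held by Dave),
and ancilla qubits `e₁,e₂,e₃` (third factor, held by Eve). -/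
abbrev W3 (d : ℕ) : Type :=
  EuclideanSpace ℂ
    ((Fin 5 → Fin d) × ((Fin 3 → Fin 2) × (Fin 3 → Fin 2) × (Fin 3 → Fin 2)))

/-- The ancilla state `|G⟩_{av₁e₁} ⊗ |G⟩_{bv₂e₂} ⊗ |G⟩_{cv₃e₃}`, where
`|G⟩ = (|000⟩+|111⟩)/√2`. -/
def ancG : EuclideanSpace ℂ ((Fin 3 → Fin 2) × (Fin 3 → Fin 2) × (Fin 3 → Fin 2)) :=
  ofFun fun q =>
    ∏ k : Fin 3,
      (if q.1 k = q.2.1 k ∧ q.2.1 k = q.2.2 k then (Real.sqrt 2 : ℂ)⁻¹ else 0)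

/-- The measurement projector
`Q_{Xx} = |0⟩⟨0|_X ⊗ |0⟩⟨0|_x + (Σ_{k=1}^{d−1}|k⟩⟨k|_X) ⊗ |1⟩⟨1|_x`
on the main subsystem at position `X` and its ancilla qubit at position `j`. -/
def QprojG (d : ℕ) (X : Fin 5) (j : Fin 3) : Module.End ℂ (W3 d) :=
  diagP fun q => ((q.1 X : ℕ) = 0 ∧ q.2.1 j = 0) ∨ ((q.1 X : ℕ) ≠ 0 ∧ q.2.1 j = 1)

/-- The post-measurement state
`(Q_{Aa}Q_{Bb}Q_{Cc})(|h⟩ ⊗ |G⟩_{av₁e₁} ⊗ |G⟩_{bv₂e₂} ⊗ |G⟩_{cv₃e₃})`. -/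
def postG (d : ℕ) (h : EuclideanSpace ℂ (Fin 5 → Fin d)) : W3 d :=
  (QprojG d 0 0 * QprojG d 1 1 * QprojG d 2 2) (tensE h ancG)

/-- Eve's projector `M₄,₁ = I_E ⊗ |1⟩⟨1|_{e₁} ⊗ |0⟩⟨0|_{e₂} ⊗ |0⟩⟨0|_{e₃}`. -/
def eveM41 (d : ℕ) : Module.End ℂ (W3 d) :=
  diagP fun q => q.2.2.2 0 = 1 ∧ q.2.2.2 1 = 0 ∧ q.2.2.2 2 = 0

/-- Eve's projector `M₄,₂ = |1⟩⟨1|_E ⊗ |1⟩⟨1|_{e₁} ⊗ |0⟩⟨0|_{e₂} ⊗ |1⟩⟨1|_{e₃}`. -/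
def eveM42 (d : ℕ) : Module.End ℂ (W3 d) :=
  diagP fun q => (q.1 4 : ℕ) = 1 ∧ q.2.2.2 0 = 1 ∧ q.2.2.2 1 = 0 ∧ q.2.2.2 2 = 1

/-- Eve's projector `M₄,₃ = P_E{1,…,d−1} ⊗ |0⟩⟨0|_{e₁} ⊗ |1⟩⟨1|_{e₂} ⊗ |1⟩⟨1|_{e₃}`. -/
def eveM43 (d : ℕ) : Module.End ℂ (W3 d) :=
  diagP fun q => (q.1 4 : ℕ) ≠ 0 ∧ q.2.2.2 0 = 0 ∧ q.2.2.2 1 = 1 ∧ q.2.2.2 2 = 1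

/-- Eve's projector `M₄,₄ = P_E{1,…,d−1} ⊗ |0⟩⟨0|_{e₁} ⊗ |0⟩⟨0|_{e₂} ⊗ I_{e₃}`. -/
def eveM44 (d : ℕ) : Module.End ℂ (W3 d) :=
  diagP fun q => (q.1 4 : ℕ) ≠ 0 ∧ q.2.2.2 0 = 0 ∧ q.2.2.2 1 = 0

/-- Eve's projector `M₄,₅ = I − M₄,₁ − M₄,₂ − M₄,₃ − M₄,₄`. -/
def eveM45 (d : ℕ) : Module.End ℂ (W3 d) :=
  1 - eveM41 d - eveM42 d - eveM43 d - eveM44 d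


open Classical in
lemma diagP_apply {ι : Type*} [Fintype ι] (f : ι → Prop) (v : EuclideanSpace ℂ ι) (q : ι) :
    diagP f v q = if f q then v q else 0 := by
  show (if f q then (1:ℂ) else 0) • v q = _
  split <;> simp

lemma diagP_eq_self {ι : Type*} [Fintype ι] {f : ι → Prop} {v : EuclideanSpace ℂ ι}
    (h : ∀ q, v q ≠ 0 → f q) : diagP f v = v := by
  ext q
  rw [diagP_apply]
  split_ifs with hq
  · rfl
  · by_contra hv
    exact hq (h q fun h0 => hv h0.symm)

lemma diagP_eq_zero {ι : Type*} [Fintype ι] {f : ι → Prop} {v : EuclideanSpace ℂ ι}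
    (h : ∀ q, v q ≠ 0 → ¬ f q) : diagP f v = 0 := by
  ext q
  rw [diagP_apply]
  split_ifs with hq
  · by_contra hv
    exact h q hv hq
  · rfl

lemma ketD_ne {d k : ℕ} {x : Fin d} (h : ketD d k x ≠ 0) : (x : ℕ) = k := by
  by_contra hc
  exact h (if_neg hc)

lemma alphaD_ne {d i : ℕ} (x : Fin d) : alphaD d i x ≠ 0 :=
  pow_ne_zero _ (Complex.exp_ne_zero _)

lemma gammaD_ne {d m : ℕ} {x : Fin d} (h : gammaD d m x ≠ 0) : (x : ℕ) ≠ 0 := by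
  intro hc; exact h (if_pos hc)

lemma tp5_ne {d : ℕ} {v0 v1 v2 v3 v4 : EuclideanSpace ℂ (Fin d)} {x : Fin 5 → Fin d}
    (h : tp5 v0 v1 v2 v3 v4 x ≠ 0) :
    v0 (x 0) ≠ 0 ∧ v1 (x 1) ≠ 0 ∧ v2 (x 2) ≠ 0 ∧ v3 (x 3) ≠ 0 ∧ v4 (x 4) ≠ 0 := by
  have h' : v0 (x 0) * v1 (x 1) * v2 (x 2) * v3 (x 3) * v4 (x 4) ≠ 0 := h
  refine ⟨?_, ?_, ?_, ?_, ?_⟩ <;> intro h0 <;> apply h' <;> simp [h0]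

lemma ancG_eq {r : (Fin 3 → Fin 2) × (Fin 3 → Fin 2) × (Fin 3 → Fin 2)} (h : ancG r ≠ 0)
    (k : Fin 3) : r.1 k = r.2.2 k := by
  have h' : (∏ k : Fin 3,
      (if r.1 k = r.2.1 k ∧ r.2.1 k = r.2.2 k then (Real.sqrt 2 : ℂ)⁻¹ else 0)) ≠ 0 := h
  have hk := Finset.prod_ne_zero_iff.mp h' k (Finset.mem_univ k)
  by_cases hc : r.1 k = r.2.1 k ∧ r.2.1 k = r.2.2 k
  · exact hc.1.trans hc.2
  · exact absurd (if_neg hc) hk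

lemma postG_facts (d : ℕ) (h : EuclideanSpace ℂ (Fin 5 → Fin d))
    (q : (Fin 5 → Fin d) × ((Fin 3 → Fin 2) × (Fin 3 → Fin 2) × (Fin 3 → Fin 2)))
    (hq : postG d h q ≠ 0) :
    h q.1 ≠ 0 ∧
    (((q.1 0 : ℕ) = 0 ∧ q.2.2.2 0 = 0) ∨ ((q.1 0 : ℕ) ≠ 0 ∧ q.2.2.2 0 = 1)) ∧
    (((q.1 1 : ℕ) = 0 ∧ q.2.2.2 1 = 0) ∨ ((q.1 1 : ℕ) ≠ 0 ∧ q.2.2.2 1 = 1)) ∧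
    (((q.1 2 : ℕ) = 0 ∧ q.2.2.2 2 = 0) ∨ ((q.1 2 : ℕ) ≠ 0 ∧ q.2.2.2 2 = 1)) := by
  simp only [postG, QprojG, Module.End.mul_apply, diagP_apply] at hq
  split_ifs at hq with h0 h1 h2
  · have ht : h q.1 * ancG q.2 ≠ 0 := hq
    have hh := left_ne_zero_of_mul ht
    have ha := right_ne_zero_of_mul ht
    have aeq : ∀ k : Fin 3, q.2.1 k = q.2.2.2 k := fun k => ancG_eq ha k
    refine ⟨hh, ?_, ?_, ?_⟩
    · rcases h0 with ⟨hx, he⟩ | ⟨hx, he⟩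
      · exact Or.inl ⟨hx, (aeq 0).symm.trans he⟩
      · exact Or.inr ⟨hx, (aeq 0).symm.trans he⟩
    · rcases h1 with ⟨hx, he⟩ | ⟨hx, he⟩
      · exact Or.inl ⟨hx, (aeq 1).symm.trans he⟩
      · exact Or.inr ⟨hx, (aeq 1).symm.trans he⟩
    · rcases h2 with ⟨hx, he⟩ | ⟨hx, he⟩
      · exact Or.inl ⟨hx, (aeq 2).symm.trans he⟩
      · exact Or.inr ⟨hx, (aeq 2).symm.trans he⟩
  · exact absurd rfl hq
  · exact absurd rfl hq
  · exact absurd rfl hq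

lemma eveOne {n : ℕ} {e : Fin 2} (D : (n = 0 ∧ e = 0) ∨ (n ≠ 0 ∧ e = 1)) (hx : n ≠ 0) :
    e = 1 := by
  rcases D with ⟨h, _⟩ | ⟨_, h⟩
  · exact absurd h hx
  · exact h

lemma eveZero {n : ℕ} {e : Fin 2} (D : (n = 0 ∧ e = 0) ∨ (n ≠ 0 ∧ e = 1)) (hx : n = 0) :
    e = 0 := by
  rcases D with ⟨_, h⟩ | ⟨h, _⟩
  · exact h
  · exact absurd hx h

/-- Step 2 of Theorem 9: `M₄,₁` acts as the identity on every
post-measurement state arising from `H₃`; `M₄,₂` on those from `H₆`; `M₄,₃` on those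
from `H₉`; `M₄,₄` on those from `H₄`; and `M₄,₅` on those from each of
`H₁, H₂, H₅, H₇, H₈, H₁₀`. -/
theorem thm9_step2_eve_measurement (d : ℕ) (hd : 3 ≤ d) :
    (∀ a p, validIdx d 2 a p →
      eveM41 d (postG d (stateOf d 2 a p)) = postG d (stateOf d 2 a p)) ∧
    (∀ a p, validIdx d 5 a p →
      eveM42 d (postG d (stateOf d 5 a p)) = postG d (stateOf d 5 a p)) ∧
    (∀ a p, validIdx d 8 a p →
      eveM43 d (postG d (stateOf d 8 a p)) = postG d (stateOf d 8 a p)) ∧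
    (∀ a p, validIdx d 3 a p →
      eveM44 d (postG d (stateOf d 3 a p)) = postG d (stateOf d 3 a p)) ∧
    (∀ k : Fin 10, k ∈ ({0, 1, 4, 6, 7, 9} : Set (Fin 10)) → ∀ a p,
      validIdx d k a p →
      eveM45 d (postG d (stateOf d k a p)) = postG d (stateOf d k a p)) := by
  constructor
  · -- M41 on H3 (k=2)
    rintro a p ⟨-, hp1, -⟩
    rw [eveM41]
    apply diagP_eq_self
    intro q hq
    obtain ⟨hh, D0, D1, D2⟩ := postG_facts d _ q hq
    rw [show stateOf d 2 a p =
        tp5 (ketD d p) (ketD d 0) (ketD d 0) (alphaD d a) (alphaD d a) from rfl] at hh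
    obtain ⟨n0, n1, n2, n3, n4⟩ := tp5_ne hh
    have x0 := ketD_ne n0
    have x1 := ketD_ne n1
    have x2 := ketD_ne n2
    exact ⟨eveOne D0 (by omega), eveZero D1 x1, eveZero D2 x2⟩
  refine ⟨?_, ?_, ?_, ?_⟩
  · -- M42 on H6 (k=5)
    rintro a p ⟨-, hp1, -⟩
    rw [eveM42]
    apply diagP_eq_self
    intro q hq
    obtain ⟨hh, D0, D1, D2⟩ := postG_facts d _ q hq
    rw [show stateOf d 5 a p =
        tp5 (gammaD d a) (ketD d 0) (ketD d p) (ketD d 0) (ketD d 1) from rfl] at hh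
    obtain ⟨n0, n1, n2, n3, n4⟩ := tp5_ne hh
    have x0 := gammaD_ne n0
    have x1 := ketD_ne n1
    have x2 := ketD_ne n2
    have x4 := ketD_ne n4
    exact ⟨x4, eveOne D0 x0, eveZero D1 x1, eveOne D2 (by omega)⟩
  · -- M43 on H9 (k=8)
    rintro a p ⟨-, hp1, -⟩
    rw [eveM43]
    apply diagP_eq_self
    intro q hq
    obtain ⟨hh, D0, D1, D2⟩ := postG_facts d _ q hq
    rw [show stateOf d 8 a p =
        tp5 (ketD d 0) (ketD d 1) (gammaD d a) (ketD d 0) (ketD d p) from rfl] at hh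
    obtain ⟨n0, n1, n2, n3, n4⟩ := tp5_ne hh
    have x0 := ketD_ne n0
    have x1 := ketD_ne n1
    have x2 := gammaD_ne n2
    have x4 := ketD_ne n4
    exact ⟨by omega, eveZero D0 x0, eveOne D1 (by omega), eveOne D2 x2⟩
  · -- M44 on H4 (k=3)
    rintro a p ⟨-, hp1, -⟩
    rw [eveM44]
    apply diagP_eq_self
    intro q hq
    obtain ⟨hh, D0, D1, D2⟩ := postG_facts d _ q hq
    rw [show stateOf d 3 a p =
        tp5 (ketD d 0) (ketD d 0) (alphaD d a) (alphaD d a) (ketD d p) from rfl] at hh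
    obtain ⟨n0, n1, n2, n3, n4⟩ := tp5_ne hh
    have x0 := ketD_ne n0
    have x1 := ketD_ne n1
    have x4 := ketD_ne n4
    exact ⟨by omega, eveZero D0 x0, eveZero D1 x1⟩
  · -- M45 cases
    intro k hk a p hv
    obtain ⟨-, hp1, -⟩ := hv
    simp only [Set.mem_insert_iff, Set.mem_singleton_iff] at hk
    have key : eveM41 d (postG d (stateOf d k a p)) = 0 ∧
        eveM42 d (postG d (stateOf d k a p)) = 0 ∧
        eveM43 d (postG d (stateOf d k a p)) = 0 ∧
        eveM44 d (postG d (stateOf d k a p)) = 0 := by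
      rcases hk with rfl | rfl | rfl | rfl | rfl | rfl
      · -- k = 0 : H1 = (α, α, p, 0, 0) : e2 = 1, E = 0
        have main : ∀ q, postG d (stateOf d 0 a p) q ≠ 0 →
            q.2.2.2 2 = 1 ∧ (q.1 4 : ℕ) = 0 := by
          intro q hq
          obtain ⟨hh, D0, D1, D2⟩ := postG_facts d _ q hq
          rw [show stateOf d 0 a p =
              tp5 (alphaD d a) (alphaD d a) (ketD d p) (ketD d 0) (ketD d 0) from rfl] at hh
          obtain ⟨n0, n1, n2, n3, n4⟩ := tp5_ne hh
          exact ⟨eveOne D2 (by have := ketD_ne n2; omega), ketD_ne n4⟩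
        refine ⟨?_, ?_, ?_, ?_⟩ <;> [rw [eveM41]; rw [eveM42]; rw [eveM43]; rw [eveM44]] <;>
          apply diagP_eq_zero <;> intro q hq hc <;> obtain ⟨he2, hE⟩ := main q hq
        · rw [he2] at hc; exact absurd hc.2.2 (by decide)
        · omega
        · exact hc.1 hE
        · exact hc.1 hE
      · -- k = 1 : H2 = (α, p, 0, 0, α) : e1 = 1, e2 = 0
        have main : ∀ q, postG d (stateOf d 1 a p) q ≠ 0 →
            q.2.2.2 1 = 1 ∧ q.2.2.2 2 = 0 := by
          intro q hq
          obtain ⟨hh, D0, D1, D2⟩ := postG_facts d _ q hq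
          rw [show stateOf d 1 a p =
              tp5 (alphaD d a) (ketD d p) (ketD d 0) (ketD d 0) (alphaD d a) from rfl] at hh
          obtain ⟨n0, n1, n2, n3, n4⟩ := tp5_ne hh
          exact ⟨eveOne D1 (by have := ketD_ne n1; omega), eveZero D2 (ketD_ne n2)⟩
        refine ⟨?_, ?_, ?_, ?_⟩ <;> [rw [eveM41]; rw [eveM42]; rw [eveM43]; rw [eveM44]] <;>
          apply diagP_eq_zero <;> intro q hq hc <;> obtain ⟨he1, he2⟩ := main q hq
        · rw [he1] at hc; exact absurd hc.2.1 (by decide)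
        · rw [he1] at hc; exact absurd hc.2.2.1 (by decide)
        · rw [he2] at hc; exact absurd hc.2.2.2 (by decide)
        · rw [he1] at hc; exact absurd hc.2.2 (by decide)
      · -- k = 4 : H5 = (0, α, α, p, 0) : e0 = 0, E = 0
        have main : ∀ q, postG d (stateOf d 4 a p) q ≠ 0 →
            q.2.2.2 0 = 0 ∧ (q.1 4 : ℕ) = 0 := by
          intro q hq
          obtain ⟨hh, D0, D1, D2⟩ := postG_facts d _ q hq
          rw [show stateOf d 4 a p =
              tp5 (ketD d 0) (alphaD d a) (alphaD d a) (ketD d p) (ketD d 0) from rfl] at hh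
          obtain ⟨n0, n1, n2, n3, n4⟩ := tp5_ne hh
          exact ⟨eveZero D0 (ketD_ne n0), ketD_ne n4⟩
        refine ⟨?_, ?_, ?_, ?_⟩ <;> [rw [eveM41]; rw [eveM42]; rw [eveM43]; rw [eveM44]] <;>
          apply diagP_eq_zero <;> intro q hq hc <;> obtain ⟨he0, hE⟩ := main q hq
        · rw [he0] at hc; exact absurd hc.1 (by decide)
        · rw [he0] at hc; exact absurd hc.2.1 (by decide)
        · exact hc.1 hE
        · exact hc.1 hE
      · -- k = 6 : H7 = (0, p, 0, 1, γ) : e0 = 0, e1 = 1, e2 = 0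
        have main : ∀ q, postG d (stateOf d 6 a p) q ≠ 0 →
            q.2.2.2 0 = 0 ∧ q.2.2.2 1 = 1 ∧ q.2.2.2 2 = 0 := by
          intro q hq
          obtain ⟨hh, D0, D1, D2⟩ := postG_facts d _ q hq
          rw [show stateOf d 6 a p =
              tp5 (ketD d 0) (ketD d p) (ketD d 0) (ketD d 1) (gammaD d a) from rfl] at hh
          obtain ⟨n0, n1, n2, n3, n4⟩ := tp5_ne hh
          exact ⟨eveZero D0 (ketD_ne n0), eveOne D1 (by have := ketD_ne n1; omega),
            eveZero D2 (ketD_ne n2)⟩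
        refine ⟨?_, ?_, ?_, ?_⟩ <;> [rw [eveM41]; rw [eveM42]; rw [eveM43]; rw [eveM44]] <;>
          apply diagP_eq_zero <;> intro q hq hc <;> obtain ⟨he0, he1, he2⟩ := main q hq
        · rw [he0] at hc; exact absurd hc.1 (by decide)
        · rw [he0] at hc; exact absurd hc.2.1 (by decide)
        · rw [he2] at hc; exact absurd hc.2.2.2 (by decide)
        · rw [he1] at hc; exact absurd hc.2.2 (by decide)
      · -- k = 7 : H8 = (p, 0, 1, γ, 0) : e0 = 1, e2 = 1, E = 0
        have main : ∀ q, postG d (stateOf d 7 a p) q ≠ 0 →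
            q.2.2.2 0 = 1 ∧ q.2.2.2 2 = 1 ∧ (q.1 4 : ℕ) = 0 := by
          intro q hq
          obtain ⟨hh, D0, D1, D2⟩ := postG_facts d _ q hq
          rw [show stateOf d 7 a p =
              tp5 (ketD d p) (ketD d 0) (ketD d 1) (gammaD d a) (ketD d 0) from rfl] at hh
          obtain ⟨n0, n1, n2, n3, n4⟩ := tp5_ne hh
          exact ⟨eveOne D0 (by have := ketD_ne n0; omega),
            eveOne D2 (by have := ketD_ne n2; omega), ketD_ne n4⟩
        refine ⟨?_, ?_, ?_, ?_⟩ <;> [rw [eveM41]; rw [eveM42]; rw [eveM43]; rw [eveM44]] <;>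
          apply diagP_eq_zero <;> intro q hq hc <;> obtain ⟨he0, he2, hE⟩ := main q hq
        · rw [he2] at hc; exact absurd hc.2.2 (by decide)
        · omega
        · rw [he0] at hc; exact absurd hc.2.1 (by decide)
        · exact hc.1 hE
      · -- k = 9 : H10 = (1, γ, 0, p, 0) : e0 = 1, e1 = 1, E = 0
        have main : ∀ q, postG d (stateOf d 9 a p) q ≠ 0 →
            q.2.2.2 0 = 1 ∧ q.2.2.2 1 = 1 ∧ (q.1 4 : ℕ) = 0 := by
          intro q hq
          obtain ⟨hh, D0, D1, D2⟩ := postG_facts d _ q hq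
          rw [show stateOf d 9 a p =
              tp5 (ketD d 1) (gammaD d a) (ketD d 0) (ketD d p) (ketD d 0) from rfl] at hh
          obtain ⟨n0, n1, n2, n3, n4⟩ := tp5_ne hh
          exact ⟨eveOne D0 (by have := ketD_ne n0; omega), eveOne D1 (gammaD_ne n1),
            ketD_ne n4⟩
        refine ⟨?_, ?_, ?_, ?_⟩ <;> [rw [eveM41]; rw [eveM42]; rw [eveM43]; rw [eveM44]] <;>
          apply diagP_eq_zero <;> intro q hq hc <;> obtain ⟨he0, he1, hE⟩ := main q hq
        · rw [he1] at hc; exact absurd hc.2.1 (by decide)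
        · rw [he1] at hc; exact absurd hc.2.2.1 (by decide)
        · rw [he0] at hc; exact absurd hc.2.1 (by decide)
        · exact hc.1 hE
    obtain ⟨z1, z2, z3, z4⟩ := key
    simp [eveM45, LinearMap.sub_apply, z1, z2, z3, z4]
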